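/- Let m > 1 be a real number, l a natural number with l < m − 1, and E < 0 a real number. Then the one-sided boundary values L_{m,l}(E − i0) := lim_{η→0+} L_{m,l}(E − iη) and L_{m,l}(E + i0) := lim_{η→0+} L_{m,l}(E + iη) exist and are nonzero, and their ratio satisfies L_{m,l}(E − i0) / L_{m,l}(E + i0) = (−1)^l · exp(−iπ(l+1)/m). -/

import Mathlib

open MeasureTheory Complex Filter Topology

/-- `L_{m,l}(ω) = ∫_{-∞}^{∞} k^l / (ω − sign(k)·|k|^m) dk` for the antisymmetric
dispersion `ε(k) = sign(k)|k|^m`. -/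
noncomputable def Lint (m : ℝ) (l : ℕ) (ω : ℂ) : ℂ :=
  ∫ k : ℝ, (k : ℂ) ^ l / (ω - ((Real.sign k * |k| ^ m : ℝ) : ℂ))

namespace Stmt4Aux
open Set

/-- The universal positive constant `J = ∫_0^∞ k^l/(k^m+1) dk`. -/
noncomputable def J (m : ℝ) (l : ℕ) : ℝ := ∫ k in Ioi (0:ℝ), k ^ l / (k ^ m + 1)

/-- `f z = ∫_0^∞ k^l/(k^m+z) dk`. -/
noncomputable def f (m : ℝ) (l : ℕ) (z : ℂ) : ℂ :=
  ∫ k in Ioi (0:ℝ), (k:ℂ) ^ l / (((k ^ m : ℝ) : ℂ) + z)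

lemma den_lb {k : ℝ} (hk : 0 ≤ k) (m : ℝ) {z : ℂ} {r C : ℝ}
    (hr : r ≤ max z.re |z.im|) (hC : ‖z‖ ≤ C) :
    max r (k ^ m - C) ≤ ‖(((k ^ m : ℝ) : ℂ) + z)‖ := by
  have hkm : 0 ≤ k ^ m := Real.rpow_nonneg hk m
  apply max_le
  · refine hr.trans (max_le ?_ ?_)
    · calc z.re ≤ k ^ m + z.re := by linarith
        _ = (((k ^ m : ℝ) : ℂ) + z).re := by simp
        _ ≤ ‖_‖ := Complex.re_le_norm _
    · calc |z.im| = |(((k ^ m : ℝ) : ℂ) + z).im| := by simp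
        _ ≤ ‖_‖ := Complex.abs_im_le_norm _
  · have h1 : ‖(((k ^ m : ℝ) : ℂ))‖ ≤
        ‖(((k ^ m : ℝ) : ℂ) + z)‖ + ‖z‖ := by
      simpa using norm_add_le (((k ^ m : ℝ) : ℂ) + z) (-z)
    have h2 : ‖(((k ^ m : ℝ) : ℂ))‖ = k ^ m := by
      rw [Complex.norm_real, Real.norm_eq_abs, _root_.abs_of_nonneg hkm]
    linarith

lemma contOn_rpow (m : ℝ) : ContinuousOn (fun k : ℝ => k ^ m) (Ioi 0) := fun x hx =>
  (Real.continuousAt_rpow_const x m (Or.inl (ne_of_gt hx))).continuousWithinAt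

lemma integrable_bound (m : ℝ) (hm : 1 < m) (l : ℕ) (hl : (l:ℝ) < m - 1)
    (p : ℕ) (hp : 1 ≤ p) {r C : ℝ} (hr : 0 < r) (hC : 0 ≤ C) :
    IntegrableOn (fun k : ℝ => k ^ l / (max r (k ^ m - C)) ^ p) (Ioi 0) := by
  have hm0 : 0 < m := by linarith
  set K : ℝ := (2*C + 1) ^ (1/m) with hK
  have hK0 : 0 < K := Real.rpow_pos_of_pos (by linarith) _
  have hKm : K ^ m = 2*C + 1 := by
    rw [hK, one_div, Real.rpow_inv_rpow (by linarith) hm0.ne']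
  have hmax : ∀ k : ℝ, 0 < max r (k ^ m - C) := fun k => lt_max_iff.mpr (Or.inl hr)
  have hcont : ContinuousOn (fun k : ℝ => k ^ l / (max r (k ^ m - C)) ^ p) (Ioi 0) := by
    apply ContinuousOn.div
    · exact (continuous_pow l).continuousOn
    · exact (continuousOn_const.sup ((contOn_rpow m).sub continuousOn_const)).pow p
    · exact fun k _ => pow_ne_zero _ (hmax k).ne'
  have hmeas : AEStronglyMeasurable (fun k : ℝ => k ^ l / (max r (k ^ m - C)) ^ p) (volume.restrict (Ioi 0)) := hcont.aestronglyMeasurable measurableSet_Ioi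
  rw [← Ioc_union_Ioi_eq_Ioi hK0.le]
  apply IntegrableOn.union
  · apply Integrable.mono' (integrable_const (K ^ l / r ^ p))
      (hmeas.mono_set Ioc_subset_Ioi_self)
    filter_upwards [ae_restrict_mem measurableSet_Ioc] with k hk
    have hk0 : 0 < k := hk.1
    rw [Real.norm_eq_abs, _root_.abs_of_nonneg (by positivity)]
    exact div_le_div₀ (by positivity) (pow_le_pow_left₀ hk0.le hk.2 l) (by positivity)
      (pow_le_pow_left₀ hr.le (le_max_left _ _) p)
  · have hexp : (l:ℝ) - p * m < -1 := by
      have h1 : (1:ℝ) ≤ p := by exact_mod_cast hp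
      nlinarith
    have hint : IntegrableOn (fun k : ℝ => 2 ^ p * k ^ ((l:ℝ) - p * m)) (Ioi K) :=
      (integrableOn_Ioi_rpow_of_lt hexp hK0).const_mul _
    apply Integrable.mono' hint (hmeas.mono_set (Ioi_subset_Ioi hK0.le))
    filter_upwards [ae_restrict_mem measurableSet_Ioi] with k hk
    have hkK : K < k := hk
    have hk0 : 0 < k := hK0.trans hkK
    have h2C : 2*C + 1 ≤ k ^ m := by
      have : K ^ m ≤ k ^ m := Real.rpow_le_rpow hK0.le hkK.le hm0.le
      linarith
    have hden : k ^ m / 2 ≤ max r (k ^ m - C) := le_max_of_le_right (by linarith)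
    rw [Real.norm_eq_abs, _root_.abs_of_nonneg (by positivity)]
    have hkm0 : (0:ℝ) < k ^ m := Real.rpow_pos_of_pos hk0 m
    calc k ^ l / (max r (k ^ m - C)) ^ p ≤ k ^ l / (k ^ m / 2) ^ p :=
          div_le_div_of_nonneg_left (by positivity) (by positivity)
            (pow_le_pow_left₀ (by positivity) hden p)
      _ = 2 ^ p * k ^ ((l:ℝ) - p * m) := by
          have e1 : ((k ^ m) ^ p : ℝ) = k ^ (m * p) := by
            rw [← Real.rpow_natCast (k ^ m) p, ← Real.rpow_mul hk0.le]
          have e2 : (k:ℝ) ^ l = k ^ ((l:ℝ)) := (Real.rpow_natCast k l).symm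
          rw [div_pow, e1, e2, Real.rpow_sub hk0]
          field_simp


lemma contOn_integrand (m : ℝ) (l : ℕ) {z : ℂ} (hz : ∀ k ∈ Ioi (0:ℝ), (((k ^ m : ℝ) : ℂ) + z) ≠ 0)
    (p : ℕ) :
    ContinuousOn (fun k : ℝ => (k:ℂ) ^ l / (((k ^ m : ℝ) : ℂ) + z) ^ p) (Ioi 0) := by
  apply ContinuousOn.div
  · exact (Complex.continuous_ofReal.comp (continuous_pow l)).continuousOn.congr
      (fun k _ => by simp)
  · exact ((Complex.continuous_ofReal.comp_continuousOn (contOn_rpow m)).add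
      continuousOn_const).pow p
  · exact fun k hk => pow_ne_zero _ (hz k hk)

lemma norm_integrand {k : ℝ} (hk : 0 < k) (m : ℝ) (l : ℕ) (z : ℂ) (p : ℕ) :
    ‖(k:ℂ) ^ l / (((k ^ m : ℝ) : ℂ) + z) ^ p‖
      = k ^ l / (‖(((k ^ m : ℝ) : ℂ) + z)‖) ^ p := by
  simp only [norm_div, norm_pow, Complex.norm_real, Real.norm_eq_abs]
  rw [_root_.abs_of_nonneg hk.le]

lemma integrableOn_integrand (m : ℝ) (hm : 1 < m) (l : ℕ) (hl : (l:ℝ) < m - 1)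
    {z : ℂ} (hz : 0 < max z.re |z.im|) :
    IntegrableOn (fun k : ℝ => (k:ℂ) ^ l / (((k ^ m : ℝ) : ℂ) + z)) (Ioi 0) := by
  set r := max z.re |z.im| with hrdef
  have hden : ∀ k ∈ Ioi (0:ℝ), (((k ^ m : ℝ) : ℂ) + z) ≠ 0 := by
    intro k hk h
    have h2 := den_lb (le_of_lt hk) m (le_refl r) (le_refl (‖z‖))
    rw [h] at h2
    simp only [norm_zero] at h2
    have := le_max_left r (k ^ m - ‖z‖)
    linarith
  have hbd := integrable_bound m hm l hl 1 le_rfl hz (norm_nonneg z)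
  apply Integrable.mono' hbd
  · have := (contOn_integrand m l hden 1).aestronglyMeasurable (μ := volume) measurableSet_Ioi
    simpa [pow_one] using this
  · filter_upwards [ae_restrict_mem measurableSet_Ioi] with k hk
    have hk0 : (0:ℝ) < k := hk
    have h2 := den_lb hk0.le m (le_refl r) (le_refl (‖z‖))
    have hmaxpos : 0 < max r (k ^ m - ‖z‖) := lt_max_iff.mpr (Or.inl hz)
    have := norm_integrand hk0 m l z 1
    rw [pow_one] at this
    rw [this]
    simp only [pow_one]
    exact div_le_div_of_nonneg_left (by positivity) hmaxpos h2

lemma slitPlane_pos_max {z : ℂ} (hz : z ∈ Complex.slitPlane) : 0 < max z.re |z.im| := by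
  rw [Complex.mem_slitPlane_iff] at hz
  rcases hz with h | h
  · exact lt_max_iff.mpr (Or.inl h)
  · exact lt_max_iff.mpr (Or.inr (abs_pos.mpr h))

lemma f_differentiableAt (m : ℝ) (hm : 1 < m) (l : ℕ) (hl : (l:ℝ) < m - 1)
    {z₀ : ℂ} (hz : z₀ ∈ Complex.slitPlane) :
    DifferentiableAt ℂ (f m l) z₀ := by
  have hr0 : 0 < max z₀.re |z₀.im| := slitPlane_pos_max hz
  set r₀ := max z₀.re |z₀.im| with hr₀def
  set ε := r₀ / 2 with hεdef
  have hε : 0 < ε := by positivity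
  set C := ‖z₀‖ + ε with hCdef
  have hC0 : 0 ≤ C := by positivity
  have hball : ∀ z ∈ Metric.ball z₀ ε, ε ≤ max z.re |z.im| ∧ ‖z‖ ≤ C := by
    intro z hz'
    have hd : ‖(z - z₀)‖ < ε := by rwa [Metric.mem_ball, Complex.dist_eq] at hz'
    have hre : |z.re - z₀.re| ≤ ‖(z - z₀)‖ := by
      simpa using Complex.abs_re_le_norm (z - z₀)
    have him : |z.im - z₀.im| ≤ ‖(z - z₀)‖ := by
      simpa using Complex.abs_im_le_norm (z - z₀)
    constructor
    · have h1 : z₀.re ≤ z.re + ε := by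
        have := abs_le.mp hre
        linarith [this.1]
      have h2 : |z₀.im| ≤ |z.im| + ε := by
        have h3 : |z₀.im| - |z.im| ≤ |z.im - z₀.im| := by
          have := abs_sub_abs_le_abs_sub z₀.im z.im
          rwa [abs_sub_comm] at this
        linarith
      have h4 : r₀ ≤ max (z.re + ε) (|z.im| + ε) := max_le_max h1 h2
      rw [max_add_add_right] at h4
      have : r₀ - ε ≤ max z.re |z.im| := by linarith
      linarith [hεdef ▸ this]
    · calc ‖z‖ ≤ ‖z₀‖ + ‖(z - z₀)‖ := by
            have := norm_add_le z₀ (z - z₀); simpa using this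
        _ ≤ C := by rw [hCdef]; linarith
  -- dominated differentiation
  have key := hasDerivAt_integral_of_dominated_loc_of_deriv_le (μ := volume.restrict (Ioi 0))
    (F := fun (z : ℂ) (k : ℝ) => (k:ℂ) ^ l / (((k ^ m : ℝ) : ℂ) + z))
    (F' := fun (z : ℂ) (k : ℝ) => -((k:ℂ) ^ l / (((k ^ m : ℝ) : ℂ) + z) ^ 2))
    (x₀ := z₀) (s := Metric.ball z₀ ε)
    (bound := fun k => k ^ l / (max ε (k ^ m - C)) ^ 2) (Metric.ball_mem_nhds z₀ hε)
    ?_ ?_ ?_ ?_ ?_ ?_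
  · exact key.2.differentiableAt
  · -- measurability eventually
    filter_upwards [Metric.ball_mem_nhds z₀ hε] with z hz'
    have hden : ∀ k ∈ Ioi (0:ℝ), (((k ^ m : ℝ) : ℂ) + z) ≠ 0 := by
      intro k hk h
      have h2 := den_lb (le_of_lt hk) m (le_refl (max z.re |z.im|)) (le_refl (‖z‖))
      rw [h] at h2
      simp only [norm_zero] at h2
      have h3 := (hball z hz').1
      have := le_max_left (max z.re |z.im|) (k ^ m - ‖z‖)
      linarith
    have := (contOn_integrand m l hden 1).aestronglyMeasurable (μ := volume) measurableSet_Ioi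
    simpa [pow_one] using this
  · -- integrability at z₀
    exact integrableOn_integrand m hm l hl hr0
  · -- measurability of F' z₀
    have hden : ∀ k ∈ Ioi (0:ℝ), (((k ^ m : ℝ) : ℂ) + z₀) ≠ 0 := by
      intro k hk h
      have h2 := den_lb (le_of_lt hk) m (le_refl r₀) (le_refl (‖z₀‖))
      rw [h] at h2
      simp only [norm_zero] at h2
      have := le_max_left r₀ (k ^ m - ‖z₀‖)
      linarith
    exact ((contOn_integrand m l hden 2).aestronglyMeasurable (μ := volume) measurableSet_Ioi).neg
  · -- bound
    filter_upwards [ae_restrict_mem measurableSet_Ioi] with k hk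
    intro z hz'
    have hk0 : (0:ℝ) < k := hk
    obtain ⟨h1, h2⟩ := hball z hz'
    have hlb := den_lb hk0.le m h1 h2
    have hmaxpos : 0 < max ε (k ^ m - C) := lt_max_iff.mpr (Or.inl hε)
    rw [norm_neg, norm_integrand hk0 m l z 2]
    apply div_le_div_of_nonneg_left (by positivity) (by positivity)
      (pow_le_pow_left₀ hmaxpos.le hlb 2)
  · -- bound integrable
    exact integrable_bound m hm l hl 2 one_le_two hε hC0
  · -- differentiability in z
    filter_upwards [ae_restrict_mem measurableSet_Ioi] with k hk
    intro z hz'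
    have hk0 : (0:ℝ) < k := hk
    obtain ⟨h1, h2⟩ := hball z hz'
    have hlb := den_lb hk0.le m h1 h2
    have hne : (((k ^ m : ℝ) : ℂ) + z) ≠ 0 := by
      intro h
      rw [h] at hlb
      simp only [norm_zero] at hlb
      have := le_max_left ε (k ^ m - C)
      linarith
    have hd : HasDerivAt (fun w : ℂ => ((k ^ m : ℝ) : ℂ) + w) 1 z :=
      (hasDerivAt_id z).const_add _
    have hd2 := (hd.inv hne).const_mul ((k:ℂ) ^ l)
    have : ((k:ℂ) ^ l * (-1 / (((k ^ m : ℝ) : ℂ) + z) ^ 2))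
        = -((k:ℂ) ^ l / (((k ^ m : ℝ) : ℂ) + z) ^ 2) := by ring
    rw [this] at hd2
    simpa [div_eq_mul_inv] using hd2


lemma f_analytic (m : ℝ) (hm : 1 < m) (l : ℕ) (hl : (l:ℝ) < m - 1) :
    AnalyticOnNhd ℂ (f m l) Complex.slitPlane :=
  DifferentiableOn.analyticOnNhd
    (fun z hz => (f_differentiableAt m hm l hl hz).differentiableWithinAt)
    Complex.isOpen_slitPlane

lemma g_analytic (c : ℂ) (s : ℝ) :
    AnalyticOnNhd ℂ (fun z : ℂ => c * z ^ (s:ℂ)) Complex.slitPlane := fun z hz =>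
  analyticAt_const.mul ((analyticAt_id.cpow analyticAt_const) hz)

lemma slitPlane_preconnected : IsPreconnected Complex.slitPlane := by
  have : IsPathConnected Complex.slitPlane := by
    refine ⟨1, Complex.one_mem_slitPlane, fun {y} hy => ?_⟩
    exact JoinedIn.of_segment_subset (starConvex_one_slitPlane.segment_subset hy)
  exact this.isConnected.isPreconnected

lemma J_pos (m : ℝ) (hm : 1 < m) (l : ℕ) (hl : (l:ℝ) < m - 1) : 0 < J m l := by
  have hint : IntegrableOn (fun k : ℝ => k ^ l / (k ^ m + 1)) (Ioi 0) := by
    apply Integrable.mono' (integrable_bound m hm l hl 1 le_rfl one_pos zero_le_one)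
    · apply ContinuousOn.aestronglyMeasurable (μ := volume) _ measurableSet_Ioi
      apply ContinuousOn.div (continuous_pow l).continuousOn
        ((contOn_rpow m).add continuousOn_const)
      intro k hk
      have : (0:ℝ) < k ^ m := Real.rpow_pos_of_pos hk m
      exact (by linarith : (0:ℝ) < k ^ m + 1).ne'
    · filter_upwards [ae_restrict_mem measurableSet_Ioi] with k hk
      have hk0 : (0:ℝ) < k := hk
      have hkm : (0:ℝ) < k ^ m := Real.rpow_pos_of_pos hk0 m
      have hle : max 1 (k ^ m - 1) ≤ k ^ m + 1 := max_le (by linarith) (by linarith)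
      rw [Real.norm_eq_abs, _root_.abs_of_nonneg (by positivity), pow_one]
      exact div_le_div_of_nonneg_left (by positivity) (lt_max_iff.mpr (Or.inl one_pos)) hle
  rw [J, setIntegral_pos_iff_support_of_nonneg_ae _ hint]
  · have hsub : Ioi (0:ℝ) ⊆ Function.support (fun k : ℝ => k ^ l / (k ^ m + 1)) := by
      intro k hk
      have hk0 : (0:ℝ) < k := hk
      have hkm : (0:ℝ) < k ^ m := Real.rpow_pos_of_pos hk0 m
      have : (0:ℝ) < k ^ l / (k ^ m + 1) := by positivity
      exact fun h => this.ne' h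
    have : Function.support (fun k : ℝ => k ^ l / (k ^ m + 1)) ∩ Ioi 0 = Ioi 0 :=
      inter_eq_self_of_subset_right hsub
    rw [this]
    simp [Real.volume_Ioi]
  · filter_upwards [ae_restrict_mem measurableSet_Ioi] with k hk
    have hk0 : (0:ℝ) < k := hk
    have hkm : (0:ℝ) < k ^ m := Real.rpow_pos_of_pos hk0 m
    positivity

lemma f_ofReal (m : ℝ) (hm : 1 < m) (l : ℕ) (hl : (l:ℝ) < m - 1) {x : ℝ} (hx : 0 < x) :
    f m l (x:ℂ) = (J m l : ℂ) * (x:ℂ) ^ (((((l:ℝ)+1)/m - 1 : ℝ)) : ℂ) := by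
  have hm0 : 0 < m := lt_trans one_pos hm
  have step1 : f m l (x:ℂ) = ((∫ k in Ioi (0:ℝ), k ^ l / (k ^ m + x) : ℝ) : ℂ) := by
    rw [f]
    calc ∫ k in Ioi (0:ℝ), (k:ℂ) ^ l / (((k ^ m : ℝ) : ℂ) + (x:ℂ))
        = ∫ k in Ioi (0:ℝ), ((k ^ l / (k ^ m + x) : ℝ) : ℂ) :=
          setIntegral_congr_fun measurableSet_Ioi (fun k _ => by push_cast; ring)
      _ = _ := integral_ofReal
  set b : ℝ := x ^ (1/m) with hb
  have hb0 : 0 < b := Real.rpow_pos_of_pos hx _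
  have hbm : b ^ m = x := by rw [hb, one_div, Real.rpow_inv_rpow hx.le hm0.ne']
  have sub := integral_comp_mul_left_Ioi (fun t : ℝ => t ^ l / (t ^ m + x)) 0 hb0
  simp only [mul_zero, smul_eq_mul] at sub
  have e : ∀ k ∈ Ioi (0:ℝ), (fun k : ℝ => (b*k) ^ l / ((b*k) ^ m + x)) k
      = (b ^ l / x) * (k ^ l / (k ^ m + 1)) := by
    intro k hk
    have hk0 : (0:ℝ) < k := hk
    have hkm : (0:ℝ) < k ^ m := Real.rpow_pos_of_pos hk0 m
    show (b*k) ^ l / ((b*k) ^ m + x) = _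
    rw [Real.mul_rpow hb0.le hk0.le, hbm, mul_pow]
    field_simp
  rw [setIntegral_congr_fun measurableSet_Ioi e, integral_const_mul] at sub
  -- sub : (b^l/x) * J m l = b⁻¹ * ∫ t in Ioi 0, t^l/(t^m+x)
  have hJx : (∫ k in Ioi (0:ℝ), k ^ l / (k ^ m + x)) = b * ((b ^ l / x) * J m l) := by
    rw [J] at *
    field_simp at sub ⊢
    linarith [sub]
  have hbpow : b * (b ^ l / x) = x ^ (((l:ℝ)+1)/m - 1) := by
    have hsplit : ((l:ℝ)+1)/m - 1 = 1/m + (1/m * l + (-1)) := by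
      field_simp
      ring
    rw [hsplit, Real.rpow_add hx, Real.rpow_add hx, Real.rpow_neg_one, hb,
      ← Real.rpow_natCast (x ^ (1/m)) l, ← Real.rpow_mul hx.le, div_eq_mul_inv]
    ring
  have : (∫ k in Ioi (0:ℝ), k ^ l / (k ^ m + x)) = x ^ (((l:ℝ)+1)/m - 1) * J m l := by
    rw [hJx, ← mul_assoc, hbpow]
  rw [step1, this]
  push_cast [Complex.ofReal_cpow hx.le]
  ring

lemma f_eq (m : ℝ) (hm : 1 < m) (l : ℕ) (hl : (l:ℝ) < m - 1) :
    EqOn (f m l) (fun z : ℂ => (J m l : ℂ) * z ^ (((((l:ℝ)+1)/m - 1 : ℝ)) : ℂ))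
      Complex.slitPlane := by
  apply AnalyticOnNhd.eqOn_of_preconnected_of_frequently_eq (f_analytic m hm l hl)
    (g_analytic _ _) slitPlane_preconnected Complex.one_mem_slitPlane
  -- frequently equal near 1
  have hseq : Tendsto (fun n : ℕ => ((1 + (n+1:ℝ)⁻¹ : ℝ) : ℂ)) atTop (𝓝[≠] (1:ℂ)) := by
    rw [tendsto_nhdsWithin_iff]
    constructor
    · have h0 : Tendsto (fun n : ℕ => (1 + (n+1:ℝ)⁻¹ : ℝ)) atTop (𝓝 1) := by
        have := tendsto_one_div_add_atTop_nhds_zero_nat (𝕜 := ℝ)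
        simpa [one_div] using (tendsto_const_nhds (x := (1:ℝ))).add this
      have := (Complex.continuous_ofReal.tendsto 1).comp h0
      simpa [Function.comp_def] using this
    · filter_upwards with n
      simp only [mem_compl_iff, mem_singleton_iff]
      intro h
      have h2 : (1 + (n+1:ℝ)⁻¹ : ℝ) = 1 := by exact_mod_cast h
      have : ((n:ℝ)+1)⁻¹ > 0 := by positivity
      linarith
  apply hseq.frequently
  apply Filter.Eventually.frequently
  filter_upwards with n
  have hx : (0:ℝ) < 1 + (n+1:ℝ)⁻¹ := by positivity
  exact f_ofReal m hm l hl hx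


lemma Lint_eq (m : ℝ) (hm : 1 < m) (l : ℕ) (hl : (l:ℝ) < m - 1) {ω : ℂ} (hω : ω.im ≠ 0) :
    Lint m l ω = -(f m l (-ω)) + (-1:ℂ)^l * f m l ω := by
  have hz1 : 0 < max (-ω).re |(-ω).im| := by
    apply lt_max_iff.mpr (Or.inr _)
    simpa using abs_pos.mpr hω
  have hz2 : 0 < max ω.re |ω.im| := lt_max_iff.mpr (Or.inr (abs_pos.mpr hω))
  set F : ℝ → ℂ := fun k => (k:ℂ) ^ l / (ω - ((Real.sign k * |k| ^ m : ℝ) : ℂ)) with hF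
  have heq1 : EqOn (fun k : ℝ => -((k:ℂ) ^ l / (((k ^ m : ℝ) : ℂ) + (-ω)))) F (Ioi 0) := by
    intro k hk
    have hk0 : (0:ℝ) < k := hk
    simp only [hF]
    rw [Real.sign_of_pos hk0, _root_.abs_of_pos hk0, one_mul]
    have : ω - ((k ^ m : ℝ) : ℂ) = -(((k ^ m : ℝ) : ℂ) + (-ω)) := by ring
    rw [this, div_neg]
  have heq2 : EqOn (fun k : ℝ => (-1:ℂ)^l * ((k:ℂ) ^ l / (((k ^ m : ℝ) : ℂ) + ω)))
      (fun k => F (-k)) (Ioi 0) := by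
    intro k hk
    have hk0 : (0:ℝ) < k := hk
    simp only [hF]
    rw [Real.sign_of_neg (by linarith : -k < 0), abs_neg, _root_.abs_of_pos hk0]
    have h1 : ((-k : ℝ) : ℂ) = -(k:ℂ) := Complex.ofReal_neg k
    have h2 : ((-1 * k ^ m : ℝ) : ℂ) = -((k ^ m : ℝ) : ℂ) := by
      rw [Complex.ofReal_mul]; norm_num
    rw [h1, h2, neg_pow (k:ℂ) l]
    have h3 : ω - -((k ^ m : ℝ):ℂ) = ((k ^ m : ℝ) : ℂ) + ω := by ring
    rw [h3]
    ring
  have hI1 : IntegrableOn F (Ioi 0) := by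
    apply IntegrableOn.congr_fun _ heq1 measurableSet_Ioi
    exact (integrableOn_integrand m hm l hl hz1).neg
  have hI2' : IntegrableOn (fun k => F (-k)) (Ioi 0) := by
    apply IntegrableOn.congr_fun _ heq2 measurableSet_Ioi
    exact (integrableOn_integrand m hm l hl hz2).const_mul _
  have A : MeasurableEmbedding (fun x : ℝ => -x) :=
    (Homeomorph.neg ℝ).isClosedEmbedding.measurableEmbedding
  have hmap : Measure.map (fun x : ℝ => -x) (volume.restrict (Ioi (0:ℝ)))
      = volume.restrict (Iio 0) := by
    rw [← Measure.map_neg_eq_self (volume : Measure ℝ)]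
    rw [Measure.restrict_map A.measurable measurableSet_Iio]
    congr 1
    ext x
    simp
  have hI2 : IntegrableOn F (Iic 0) := by
    have h1 : IntegrableOn F (Iio 0) := by
      rw [IntegrableOn, ← hmap, A.integrable_map_iff]
      exact hI2'
    rw [IntegrableOn, Measure.restrict_congr_set (Iio_ae_eq_Iic (a := (0:ℝ))).symm]
    exact h1
  have hsplit : Lint m l ω = (∫ k in Iic (0:ℝ), F k) + ∫ k in Ioi (0:ℝ), F k :=
    (intervalIntegral.integral_Iic_add_Ioi hI2 hI1).symm
  have hright : ∫ k in Ioi (0:ℝ), F k = -(f m l (-ω)) := by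
    rw [← setIntegral_congr_fun measurableSet_Ioi heq1, integral_neg, f]
  have hleft : ∫ k in Iic (0:ℝ), F k = (-1:ℂ)^l * f m l ω := by
    have h1 := integral_comp_neg_Iic (0:ℝ) (fun t => F (-t))
    simp only [neg_neg, neg_zero] at h1
    rw [h1, ← setIntegral_congr_fun measurableSet_Ioi heq2, integral_const_mul, f]
  rw [hsplit, hleft, hright]
  ring

end Stmt4Aux

set_option maxHeartbeats 2000000 in
open Stmt4Aux in
/-- For `m > 1`, `l < m − 1` and `E < 0`, the boundary values
`L_{m,l}(E ∓ i0) = lim_{η→0+} L_{m,l}(E ∓ iη)` exist, are nonzero, and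
`L_{m,l}(E − i0)/L_{m,l}(E + i0) = (−1)^l e^{−iπ(l+1)/m}`. -/
theorem stmt4 (m : ℝ) (hm : 1 < m) (l : ℕ) (hl : (l : ℝ) < m - 1)
    (E : ℝ) (hE : E < 0) :
    ∃ Lminus Lplus : ℂ,
      Tendsto (fun η : ℝ => Lint m l ((E : ℂ) - (η : ℂ) * Complex.I))
        (𝓝[>] 0) (𝓝 Lminus) ∧
      Tendsto (fun η : ℝ => Lint m l ((E : ℂ) + (η : ℂ) * Complex.I))
        (𝓝[>] 0) (𝓝 Lplus) ∧
      Lminus ≠ 0 ∧ Lplus ≠ 0 ∧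
      Lminus / Lplus =
        (-1 : ℂ) ^ l *
          Complex.exp (-(((Real.pi * ((l : ℝ) + 1) / m : ℝ) : ℂ) * Complex.I)) := by
  have hm0 : 0 < m := by linarith
  set u : ℂ := (-1:ℂ)^l with hu_def
  set cm : ℂ := Complex.exp (-(((Real.pi * ((l : ℝ) + 1) / m : ℝ) : ℂ) * Complex.I)) with hcm_def
  set cp : ℂ := Complex.exp ((((Real.pi * ((l : ℝ) + 1) / m : ℝ) : ℂ) * Complex.I)) with hcp_def
  set α : ℝ := ((l:ℝ) + 1) / m with hα
  set s : ℝ := α - 1 with hs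
  have hα0 : 0 < α := by rw [hα]; positivity
  have hα1 : α < 1 := by rw [hα, div_lt_one hm0]; linarith
  set R : ℝ := -E with hR
  have hR0 : 0 < R := by rw [hR]; linarith
  have hu : u * u = 1 := by
    rw [hu_def, ← pow_add]
    exact Even.neg_one_pow ⟨l, rfl⟩
  have huim : u.im = 0 := by
    rw [hu_def]
    have h1 : ((-1:ℂ))^l = (((-1:ℝ)^l : ℝ) : ℂ) := by push_cast; ring
    rw [h1, Complex.ofReal_im]
  set sC : ℂ := ((s : ℝ) : ℂ) with hsC
  set P : ℂ := Complex.exp (((Real.log R : ℝ) : ℂ) * sC) with hP_def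
  set wm : ℂ := Complex.exp (((-(Real.pi * s) : ℝ) : ℂ) * Complex.I) with hwm_def
  set wp : ℂ := Complex.exp ((((Real.pi * s) : ℝ) : ℂ) * Complex.I) with hwp_def
  have hθ1 : 0 < -(Real.pi * s) := by nlinarith [Real.pi_pos]
  have hθ2 : -(Real.pi * s) < Real.pi := by nlinarith [Real.pi_pos]
  have hwm_im : wm.im ≠ 0 := by
    rw [hwm_def, Complex.exp_ofReal_mul_I_im]
    exact (Real.sin_pos_of_pos_of_lt_pi hθ1 hθ2).ne'
  have hwp_im : wp.im ≠ 0 := by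
    rw [hwp_def, Complex.exp_ofReal_mul_I_im]
    have h1 : Real.sin (Real.pi * s) = -Real.sin (-(Real.pi * s)) := by
      rw [Real.sin_neg, neg_neg]
    rw [h1, neg_ne_zero]
    exact (Real.sin_pos_of_pos_of_lt_pi hθ1 hθ2).ne'
  have haux : ∀ w : ℂ, w.im ≠ 0 → u * w - 1 ≠ 0 := by
    intro w hw h
    have h1 : u * w = 1 := by linear_combination h
    have h2 : w = u := by
      calc w = (u * u) * w := by rw [hu, one_mul]
        _ = u * (u * w) := by ring
        _ = u := by rw [h1, mul_one]
    rw [h2] at hw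
    exact hw huim
  have hJ : (J m l : ℂ) ≠ 0 := by exact_mod_cast (J_pos m hm l hl).ne'
  have hP : P ≠ 0 := Complex.exp_ne_zero _
  have hO : ∀ η : ℝ, ((E:ℂ) - (η:ℂ) * Complex.I).im = -η := by intro η; simp
  have hO' : ∀ η : ℝ, ((E:ℂ) + (η:ℂ) * Complex.I).im = η := by intro η; simp
  have hexp_eq : ((((l:ℝ)+1)/m - 1 : ℝ) : ℂ) = sC := by rw [hsC, hs, hα]
  have habs : ‖((E:ℂ))‖ = R := by
    rw [Complex.norm_real, Real.norm_eq_abs, abs_of_neg hE, hR]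
  have hEre : ((E:ℂ)).re < 0 := by simpa using hE
  -- limit of the regular piece
  have hmemneg : -(E:ℂ) ∈ Complex.slitPlane :=
    Complex.mem_slitPlane_iff.mpr (Or.inl (by simpa using hE))
  have hAP : (-(E:ℂ)) ^ sC = P := by
    have h1 : -(E:ℂ) = ((R:ℝ):ℂ) := by rw [hR]; push_cast; ring
    rw [h1, Complex.cpow_def_of_ne_zero (by exact_mod_cast hR0.ne'),
      ← Complex.ofReal_log hR0.le, hP_def]
  have T1m : Tendsto (fun η : ℝ => (-((E:ℂ) - (η:ℂ) * Complex.I)) ^ sC) (𝓝[>] 0)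
      (𝓝 P) := by
    have hc : Continuous (fun η : ℝ => -((E:ℂ) - (η:ℂ) * Complex.I)) := by fun_prop
    have h0 : Tendsto (fun η : ℝ => -((E:ℂ) - (η:ℂ) * Complex.I)) (𝓝[>] 0) (𝓝 (-(E:ℂ))) := by
      have := (hc.tendsto 0).mono_left (nhdsWithin_le_nhds : 𝓝[>] (0:ℝ) ≤ 𝓝 0)
      simpa using this
    have := (continuousAt_cpow_const (b := sC) hmemneg).tendsto.comp h0
    rwa [hAP] at this
  have T1p : Tendsto (fun η : ℝ => (-((E:ℂ) + (η:ℂ) * Complex.I)) ^ sC) (𝓝[>] 0)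
      (𝓝 P) := by
    have hc : Continuous (fun η : ℝ => -((E:ℂ) + (η:ℂ) * Complex.I)) := by fun_prop
    have h0 : Tendsto (fun η : ℝ => -((E:ℂ) + (η:ℂ) * Complex.I)) (𝓝[>] 0) (𝓝 (-(E:ℂ))) := by
      have := (hc.tendsto 0).mono_left (nhdsWithin_le_nhds : 𝓝[>] (0:ℝ) ≤ 𝓝 0)
      simpa using this
    have := (continuousAt_cpow_const (b := sC) hmemneg).tendsto.comp h0
    rwa [hAP] at this
  -- limit of the singular piece, minus side
  have T2m : Tendsto (fun η : ℝ => ((E:ℂ) - (η:ℂ) * Complex.I) ^ sC) (𝓝[>] 0)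
      (𝓝 (P * wm)) := by
    have hmem2 : Tendsto (fun η : ℝ => (E:ℂ) - (η:ℂ) * Complex.I) (𝓝[>] 0)
        (𝓝[{z : ℂ | z.im < 0}] (E:ℂ)) := by
      rw [tendsto_nhdsWithin_iff]
      constructor
      · have hc : Continuous (fun η : ℝ => (E:ℂ) - (η:ℂ) * Complex.I) := by fun_prop
        have := (hc.tendsto 0).mono_left (nhdsWithin_le_nhds : 𝓝[>] (0:ℝ) ≤ 𝓝 0)
        simpa using this
      · filter_upwards [self_mem_nhdsWithin] with η hη
        simp only [Set.mem_setOf_eq, hO]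
        exact neg_lt_zero.mpr hη
    have hlogm := (Complex.tendsto_log_nhdsWithin_im_neg_of_re_neg_of_im_zero
        hEre (by simp)).comp hmem2
    rw [habs] at hlogm
    have h1 := (Complex.continuous_exp.tendsto _).comp (hlogm.mul_const sC)
    have h2 : Complex.exp ((↑(Real.log R) - ↑Real.pi * Complex.I) * sC) = P * wm := by
      rw [hP_def, hwm_def, ← Complex.exp_add]
      congr 1
      rw [hsC]
      push_cast
      ring
    rw [h2] at h1
    apply h1.congr'
    filter_upwards [self_mem_nhdsWithin] with η hη
    have hne : ((E:ℂ) - (η:ℂ) * Complex.I) ≠ 0 := by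
      intro h
      have h0 : ((E:ℂ) - (η:ℂ) * Complex.I).im = -η := hO η
      rw [h] at h0
      simp only [Complex.zero_im] at h0
      have hη0 : (0:ℝ) < η := hη
      linarith
    exact (Complex.cpow_def_of_ne_zero hne sC).symm
  -- limit of the singular piece, plus side
  have T2p : Tendsto (fun η : ℝ => ((E:ℂ) + (η:ℂ) * Complex.I) ^ sC) (𝓝[>] 0)
      (𝓝 (P * wp)) := by
    have hmem2 : Tendsto (fun η : ℝ => (E:ℂ) + (η:ℂ) * Complex.I) (𝓝[>] 0)
        (𝓝[{z : ℂ | 0 ≤ z.im}] (E:ℂ)) := by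
      rw [tendsto_nhdsWithin_iff]
      constructor
      · have hc : Continuous (fun η : ℝ => (E:ℂ) + (η:ℂ) * Complex.I) := by fun_prop
        have := (hc.tendsto 0).mono_left (nhdsWithin_le_nhds : 𝓝[>] (0:ℝ) ≤ 𝓝 0)
        simpa using this
      · filter_upwards [self_mem_nhdsWithin] with η hη
        simp only [Set.mem_setOf_eq, hO']
        exact le_of_lt hη
    have hlogp := (Complex.tendsto_log_nhdsWithin_im_nonneg_of_re_neg_of_im_zero
        hEre (by simp)).comp hmem2
    rw [habs] at hlogp
    have h1 := (Complex.continuous_exp.tendsto _).comp (hlogp.mul_const sC)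
    have h2 : Complex.exp ((↑(Real.log R) + ↑Real.pi * Complex.I) * sC) = P * wp := by
      rw [hP_def, hwp_def, ← Complex.exp_add]
      congr 1
      rw [hsC]
      push_cast
      ring
    rw [h2] at h1
    apply h1.congr'
    filter_upwards [self_mem_nhdsWithin] with η hη
    have hne : ((E:ℂ) + (η:ℂ) * Complex.I) ≠ 0 := by
      intro h
      have h0 : ((E:ℂ) + (η:ℂ) * Complex.I).im = η := hO' η
      rw [h] at h0
      simp only [Complex.zero_im] at h0
      have hη0 : (0:ℝ) < η := hη
      linarith
    exact (Complex.cpow_def_of_ne_zero hne sC).symm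
  -- assembled limits
  have hLm : Tendsto (fun η : ℝ => Lint m l ((E:ℂ) - (η:ℂ) * Complex.I)) (𝓝[>] 0)
      (𝓝 (-((J m l : ℂ) * P) + u * ((J m l : ℂ) * (P * wm)))) := by
    have hbase : Tendsto (fun η : ℝ =>
        -((J m l : ℂ) * ((-((E:ℂ) - (η:ℂ) * Complex.I)) ^ sC))
          + u * ((J m l : ℂ) * (((E:ℂ) - (η:ℂ) * Complex.I) ^ sC))) (𝓝[>] 0)
        (𝓝 (-((J m l : ℂ) * P) + u * ((J m l : ℂ) * (P * wm)))) :=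
      ((T1m.const_mul _).neg).add ((T2m.const_mul _).const_mul u)
    apply hbase.congr'
    filter_upwards [self_mem_nhdsWithin] with η hη
    have hωim : ((E:ℂ) - (η:ℂ) * Complex.I).im ≠ 0 := by
      rw [hO η]; exact neg_ne_zero.mpr (ne_of_gt hη)
    rw [Lint_eq m hm l hl hωim]
    have hsl1 : -((E:ℂ) - (η:ℂ) * Complex.I) ∈ Complex.slitPlane := by
      apply Complex.mem_slitPlane_iff.mpr (Or.inr _)
      simpa using hωim
    have hsl2 : ((E:ℂ) - (η:ℂ) * Complex.I) ∈ Complex.slitPlane :=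
      Complex.mem_slitPlane_iff.mpr (Or.inr hωim)
    rw [f_eq m hm l hl hsl1, f_eq m hm l hl hsl2]
  have hLp : Tendsto (fun η : ℝ => Lint m l ((E:ℂ) + (η:ℂ) * Complex.I)) (𝓝[>] 0)
      (𝓝 (-((J m l : ℂ) * P) + u * ((J m l : ℂ) * (P * wp)))) := by
    have hbase : Tendsto (fun η : ℝ =>
        -((J m l : ℂ) * ((-((E:ℂ) + (η:ℂ) * Complex.I)) ^ sC))
          + u * ((J m l : ℂ) * (((E:ℂ) + (η:ℂ) * Complex.I) ^ sC))) (𝓝[>] 0)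
        (𝓝 (-((J m l : ℂ) * P) + u * ((J m l : ℂ) * (P * wp)))) :=
      ((T1p.const_mul _).neg).add ((T2p.const_mul _).const_mul u)
    apply hbase.congr'
    filter_upwards [self_mem_nhdsWithin] with η hη
    have hωim : ((E:ℂ) + (η:ℂ) * Complex.I).im ≠ 0 := by
      rw [hO' η]; exact ne_of_gt hη
    rw [Lint_eq m hm l hl hωim]
    have hsl1 : -((E:ℂ) + (η:ℂ) * Complex.I) ∈ Complex.slitPlane := by
      apply Complex.mem_slitPlane_iff.mpr (Or.inr _)
      simpa using hωim
    have hsl2 : ((E:ℂ) + (η:ℂ) * Complex.I) ∈ Complex.slitPlane :=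
      Complex.mem_slitPlane_iff.mpr (Or.inr hωim)
    rw [f_eq m hm l hl hsl1, f_eq m hm l hl hsl2]
  -- algebraic endgame
  have hfact_m : -((J m l : ℂ) * P) + u * ((J m l : ℂ) * (P * wm))
      = ((J m l : ℂ) * P) * (u * wm - 1) := by ring
  have hfact_p : -((J m l : ℂ) * P) + u * ((J m l : ℂ) * (P * wp))
      = ((J m l : ℂ) * P) * (u * wp - 1) := by ring
  have hnm : (-((J m l : ℂ) * P) + u * ((J m l : ℂ) * (P * wm))) ≠ 0 := by
    rw [hfact_m]
    exact mul_ne_zero (mul_ne_zero hJ hP) (haux wm hwm_im)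
  have hnp : (-((J m l : ℂ) * P) + u * ((J m l : ℂ) * (P * wp))) ≠ 0 := by
    rw [hfact_p]
    exact mul_ne_zero (mul_ne_zero hJ hP) (haux wp hwp_im)
  refine ⟨_, _, hLm, hLp, hnm, hnp, ?_⟩
  have hexpneg : Complex.exp (((-Real.pi : ℝ) : ℂ) * Complex.I) = -1 := by
    push_cast
    rw [neg_mul, Complex.exp_neg, Complex.exp_pi_mul_I]
    norm_num
  have he1 : wm = -cm := by
    rw [hwm_def, hcm_def, show ((-(Real.pi * s) : ℝ) : ℂ) * Complex.I
        = -(((Real.pi * ((l:ℝ)+1)/m : ℝ) : ℂ) * Complex.I) + ↑Real.pi * Complex.I from by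
      rw [hs, hα]; push_cast; ring, Complex.exp_add, Complex.exp_pi_mul_I]
    ring
  have he2 : wp = -cp := by
    rw [hwp_def, hcp_def, show (((Real.pi * s) : ℝ) : ℂ) * Complex.I
        = (((Real.pi * ((l:ℝ)+1)/m : ℝ) : ℂ) * Complex.I) + ((-Real.pi : ℝ) : ℂ) * Complex.I from by
      rw [hs, hα]; push_cast; ring, Complex.exp_add, hexpneg]
    ring
  have hcc : cm * cp = 1 := by
    rw [hcm_def, hcp_def, ← Complex.exp_add, neg_add_cancel, Complex.exp_zero]
  have hkey : u * wm - 1 = (u * cm) * (u * wp - 1) := by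
    rw [he1, he2]
    linear_combination (cm * cp) * hu + hcc
  rw [hfact_m, hfact_p, div_eq_iff (by rw [← hfact_p]; exact hnp), hkey]
  ring
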